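/- Let σ be a positive natural number, N_x ≥ 2 a natural number, δt > 0, δx > 0 and c ∈ ℝ. Let u, u' : {0,1,…,N_x} → ℂ satisfy the homogeneous Dirichlet boundary conditions u_0 = u_{N_x} = u'_0 = u'_{N_x} = 0, and write ū_j := (u_j + u'_j)/2. Suppose that for every interior index j (1 ≤ j ≤ N_x − 1) the fully discrete mid-point scheme holds: i (u'_j − u_j)/δt + (c/δt) · (ū_{j+1} − 2ū_j + ū_{j−1})/δx² + |ū_j|^{2σ} ū_j = 0. Then the discrete charge conservation law holds: δx · Σ_{j=0}^{N_x} |u'_j|² = δx · Σ_{j=0}^{N_x} |u_j|² (Theorem 3.7, equation (3.17), applied pathwise with c the Brownian increment δW_n). -/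

import Mathlib

open Complex Finset

/-- discrete charge conservation law of the fully discrete
(centered finite difference in space, mid-point in time) scheme under homogeneous
Dirichlet boundary conditions: `δx Σ_j |u'_j|² = δx Σ_j |u_j|²`. -/
theorem stmt_13 (σ : ℕ) (hσ : 0 < σ) (Nx : ℕ) (hNx : 2 ≤ Nx)
    (δt : ℝ) (hδt : 0 < δt) (δx : ℝ) (hδx : 0 < δx) (c : ℝ)
    (u u' : ℕ → ℂ)
    (hbc : u 0 = 0 ∧ u Nx = 0 ∧ u' 0 = 0 ∧ u' Nx = 0)
    (ubar : ℕ → ℂ) (hubar : ∀ j, ubar j = (u j + u' j) / 2)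
    (hscheme : ∀ j : ℕ, 1 ≤ j → j < Nx →
      Complex.I * (u' j - u j) / (δt : ℂ)
        + ((c : ℂ) / (δt : ℂ)) * (ubar (j + 1) - 2 * ubar j + ubar (j - 1)) / (δx : ℂ) ^ 2
        + ((Complex.normSq (ubar j) : ℂ)) ^ σ * ubar j = 0) :
    δx * ∑ j ∈ Finset.range (Nx + 1), ‖u' j‖ ^ 2
      = δx * ∑ j ∈ Finset.range (Nx + 1), ‖u j‖ ^ 2 := by
  obtain ⟨hu0, huN, hu'0, hu'N⟩ := hbc
  have hb0 : ubar 0 = 0 := by rw [hubar, hu0, hu'0]; ring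
  have hbN : ubar Nx = 0 := by rw [hubar, huN, hu'N]; ring
  have hδt' : (δt:ℂ) ≠ 0 := Complex.ofReal_ne_zero.2 hδt.ne'
  have hδx' : (δx:ℂ) ≠ 0 := Complex.ofReal_ne_zero.2 hδx.ne'
  -- the local (per interior point) identity
  have key : ∀ j ∈ Finset.Ico 1 Nx,
      ((Complex.normSq (u' j) : ℂ)) - ((Complex.normSq (u j) : ℂ))
        = Complex.I * ((c:ℂ)/(δx:ℂ)^2) *
          ((ubar (j+1) * (starRingEnd ℂ) (ubar j) + ubar (j-1) * (starRingEnd ℂ) (ubar j))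
            - (starRingEnd ℂ) (ubar (j+1) * (starRingEnd ℂ) (ubar j)
                + ubar (j-1) * (starRingEnd ℂ) (ubar j))) := by
    intro j hj
    rw [Finset.mem_Ico] at hj
    have hs := hscheme j hj.1 hj.2
    have hd : u' j - u j = Complex.I * δt * (((c:ℂ)/δt) * (ubar (j+1) - 2*ubar j + ubar (j-1)) / (δx:ℂ)^2
        + ((Complex.normSq (ubar j) : ℂ))^σ * ubar j) := by
      field_simp at hs ⊢
      linear_combination (-Complex.I) * hs
        + ((u' j - u j)*(δx:ℂ)^2) * Complex.I_sq
    have h1 : ((Complex.normSq (u' j) : ℂ)) - ((Complex.normSq (u j) : ℂ))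
        = (u' j - u j) * (starRingEnd ℂ) (ubar j)
          + ubar j * (starRingEnd ℂ) (u' j - u j) := by
      rw [← Complex.mul_conj, ← Complex.mul_conj, hubar j]
      simp only [map_add, map_sub, map_div₀, map_ofNat]
      ring
    rw [h1, hd]
    simp only [map_mul, map_add, map_sub, map_pow, map_div₀, map_ofNat,
      Complex.conj_conj, Complex.conj_I, Complex.conj_ofReal]
    field_simp
    ring
  -- the interior sum vanishes, by a symmetry (reindexing) argument
  have hsum : ∑ j ∈ Finset.Ico 1 Nx,
      (((Complex.normSq (u' j) : ℂ)) - ((Complex.normSq (u j) : ℂ))) = 0 := by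
    rw [Finset.sum_congr rfl key, ← Finset.mul_sum]
    have hW : ∑ j ∈ Finset.Ico 1 Nx,
        ((ubar (j+1) * (starRingEnd ℂ) (ubar j) + ubar (j-1) * (starRingEnd ℂ) (ubar j))
          - (starRingEnd ℂ) (ubar (j+1) * (starRingEnd ℂ) (ubar j)
              + ubar (j-1) * (starRingEnd ℂ) (ubar j))) = 0 := by
      rw [Finset.sum_sub_distrib, ← map_sum]
      set W : ℂ := ∑ j ∈ Finset.Ico 1 Nx,
        (ubar (j+1) * (starRingEnd ℂ) (ubar j) + ubar (j-1) * (starRingEnd ℂ) (ubar j)) with hWdef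
      have hconj : (starRingEnd ℂ) W = W := by
        rw [hWdef, map_sum]
        simp only [map_add, map_mul, Complex.conj_conj]
        have e1 : ∑ j ∈ Finset.Ico 1 Nx, (starRingEnd ℂ) (ubar (j+1)) * ubar j
            = ∑ i ∈ Finset.range (Nx-1), ubar (i+1) * (starRingEnd ℂ) (ubar (i+1+1)) := by
          rw [Finset.sum_Ico_eq_sum_range]
          refine Finset.sum_congr rfl (fun i _ => ?_)
          rw [show 1+i = i+1 by omega]; ring
        have e3 : ∑ j ∈ Finset.Ico 1 Nx, (starRingEnd ℂ) (ubar (j-1)) * ubar j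
            = ∑ i ∈ Finset.range (Nx-1), ubar (i+1) * (starRingEnd ℂ) (ubar i) := by
          rw [Finset.sum_Ico_eq_sum_range]
          refine Finset.sum_congr rfl (fun i _ => ?_)
          rw [show 1+i-1 = i by omega, show 1+i = i+1 by omega]; ring
        have e2 : ∑ j ∈ Finset.Ico 1 Nx, ubar (j+1) * (starRingEnd ℂ) (ubar j)
            = ∑ i ∈ Finset.range (Nx-1), ubar (i+1+1) * (starRingEnd ℂ) (ubar (i+1)) := by
          rw [Finset.sum_Ico_eq_sum_range]
          refine Finset.sum_congr rfl (fun i _ => ?_)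
          rw [show 1+i = i+1 by omega]
        have e4 : ∑ j ∈ Finset.Ico 1 Nx, ubar (j-1) * (starRingEnd ℂ) (ubar j)
            = ∑ i ∈ Finset.range (Nx-1), ubar i * (starRingEnd ℂ) (ubar (i+1)) := by
          rw [Finset.sum_Ico_eq_sum_range]
          refine Finset.sum_congr rfl (fun i _ => ?_)
          rw [show 1+i-1 = i by omega, show 1+i = i+1 by omega]
        rw [Finset.sum_add_distrib, Finset.sum_add_distrib, e1, e3, e2, e4]
        set n := Nx - 1 with hn
        have hnN : n + 1 = Nx := by omega
        have shiftg : ∑ i ∈ Finset.range n, ubar (i+1) * (starRingEnd ℂ) (ubar (i+1+1))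
            = ∑ i ∈ Finset.range n, ubar i * (starRingEnd ℂ) (ubar (i+1)) := by
          have A := Finset.sum_range_succ' (fun i => ubar i * (starRingEnd ℂ) (ubar (i+1))) n
          have B := Finset.sum_range_succ (fun i => ubar i * (starRingEnd ℂ) (ubar (i+1))) n
          rw [hb0, zero_mul, add_zero] at A
          have hbn1 : ubar (n+1) = 0 := by rw [hnN]; exact hbN
          rw [hbn1, map_zero, mul_zero, add_zero] at B
          exact A.symm.trans B
        have shifth : ∑ i ∈ Finset.range n, ubar (i+1+1) * (starRingEnd ℂ) (ubar (i+1))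
            = ∑ i ∈ Finset.range n, ubar (i+1) * (starRingEnd ℂ) (ubar i) := by
          have A := Finset.sum_range_succ' (fun i => ubar (i+1) * (starRingEnd ℂ) (ubar i)) n
          have B := Finset.sum_range_succ (fun i => ubar (i+1) * (starRingEnd ℂ) (ubar i)) n
          rw [hb0, map_zero, mul_zero, add_zero] at A
          have hbn1 : ubar (n+1) = 0 := by rw [hnN]; exact hbN
          rw [hbn1, zero_mul, add_zero] at B
          exact A.symm.trans B
        rw [shiftg, shifth]
        ring
      rw [hconj, sub_self]
    rw [hW, mul_zero]
  -- convert to the real statement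
  have hsumR : ∑ j ∈ Finset.Ico 1 Nx, Complex.normSq (u' j)
      = ∑ j ∈ Finset.Ico 1 Nx, Complex.normSq (u j) := by
    have : ((∑ j ∈ Finset.Ico 1 Nx, Complex.normSq (u' j)
        - ∑ j ∈ Finset.Ico 1 Nx, Complex.normSq (u j) : ℝ) : ℂ) = 0 := by
      push_cast
      rw [← Finset.sum_sub_distrib]
      exact hsum
    have h0 := Complex.ofReal_eq_zero.1 this
    linarith [h0]
  have habs : ∀ v : ℕ → ℂ, ∑ j ∈ Finset.range (Nx + 1), ‖v j‖ ^ 2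
      = ∑ j ∈ Finset.range (Nx + 1), Complex.normSq (v j) := by
    intro v
    exact Finset.sum_congr rfl (fun j _ => Complex.sq_norm (v j))
  rw [habs u, habs u']
  have hsplit : ∀ v : ℕ → ℂ, v 0 = 0 → v Nx = 0 →
      ∑ j ∈ Finset.range (Nx + 1), Complex.normSq (v j)
        = ∑ j ∈ Finset.Ico 1 Nx, Complex.normSq (v j) := by
    intro v hv0 hvN
    rw [Finset.sum_range_succ, hvN, Finset.range_eq_Ico,
      Finset.sum_eq_sum_Ico_succ_bot (by omega : 0 < Nx), hv0]
    simp
  rw [hsplit u hu0 huN, hsplit u' hu'0 hu'N, hsumR]
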